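/- Let (B, m, u, Δ, ε, c) be a braided bialgebra over a field K and let V be a categorical subspace of (B, c). Define the iterated powers of V in B by V^{·0} := K·1_B and V^{·n} := V^{·(n−1)}·V (the linear span of products x·v with x ∈ V^{·(n−1)}, v ∈ V) for n ≥ 1. Then V^{·n} is a categorical subspace of (B, c) for every n ∈ ℕ. -/

import Mathlib

open TensorProduct LinearMap

noncomputable section

variable (K : Type*) [Field K]

section BraidedDefs

variable (V : Type*) [AddCommGroup V] [Module K V]

/-- The Yang–Baxter (braid) equation for `c : V ⊗ V → V ⊗ V`:
`c₁ c₂ c₁ = c₂ c₁ c₂` on `(V ⊗ V) ⊗ V`, where `c₁ = c ⊗ id` and `c₂ = id ⊗ c`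
(transported along the associator). -/
def YangBaxter (c : V ⊗[K] V →ₗ[K] V ⊗[K] V) : Prop :=
  (rTensor V c) ∘ₗ
      ((TensorProduct.assoc K V V V).symm.toLinearMap ∘ₗ (lTensor V c) ∘ₗ
        (TensorProduct.assoc K V V V).toLinearMap) ∘ₗ (rTensor V c)
    = ((TensorProduct.assoc K V V V).symm.toLinearMap ∘ₗ (lTensor V c) ∘ₗ
        (TensorProduct.assoc K V V V).toLinearMap) ∘ₗ (rTensor V c) ∘ₗ
      ((TensorProduct.assoc K V V V).symm.toLinearMap ∘ₗ (lTensor V c) ∘ₗ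
        (TensorProduct.assoc K V V V).toLinearMap)

variable {V}

/-- The image of `L ⊗ V` in `V ⊗ V`, for a subspace `L ≤ V`. -/
def lT (L : Submodule K V) : Submodule K (V ⊗[K] V) :=
  LinearMap.range (rTensor V L.subtype)

/-- The image of `V ⊗ L` in `V ⊗ V`, for a subspace `L ≤ V`. -/
def rT (L : Submodule K V) : Submodule K (V ⊗[K] V) :=
  LinearMap.range (lTensor V L.subtype)

/-- `L` is a pre-categorical subspace of `(V, c)`:
`c (L⊗V + V⊗L) ⊆ L⊗V + V⊗L`. -/
def IsPreCategorical (c : V ⊗[K] V →ₗ[K] V ⊗[K] V) (L : Submodule K V) : Prop :=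
  Submodule.map c (lT K L ⊔ rT K L) ≤ lT K L ⊔ rT K L

/-- `L` is a categorical subspace of `(V, c)`:
`c (L⊗V) ⊆ V⊗L` and `c (V⊗L) ⊆ L⊗V`. -/
def IsCategorical (c : V ⊗[K] V →ₗ[K] V ⊗[K] V) (L : Submodule K V) : Prop :=
  Submodule.map c (lT K L) ≤ rT K L ∧ Submodule.map c (rT K L) ≤ lT K L

/-- A morphism of braided vector spaces `f : (V, cV) → (W, cW)`:
`cW ∘ (f ⊗ f) = (f ⊗ f) ∘ cV`. -/
def IsBraidedHom {W : Type*} [AddCommGroup W] [Module K W]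
    (cV : V ⊗[K] V →ₗ[K] V ⊗[K] V) (cW : W ⊗[K] W →ₗ[K] W ⊗[K] W)
    (f : V →ₗ[K] W) : Prop :=
  cW ∘ₗ TensorProduct.map f f = TensorProduct.map f f ∘ₗ cV

end BraidedDefs

/-- A braided bialgebra `(B, m, u, Δ, ε, c)` over `K`, with all structure maps
given as `K`-linear maps. -/
structure BB (B : Type*) [AddCommGroup B] [Module K B] where
  /-- multiplication -/
  mul : B ⊗[K] B →ₗ[K] B
  /-- unit -/
  unit : K →ₗ[K] B
  /-- comultiplication -/
  comul : B →ₗ[K] B ⊗[K] B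
  /-- counit -/
  counit : B →ₗ[K] K
  /-- braiding -/
  braid : B ⊗[K] B →ₗ[K] B ⊗[K] B
  mul_assoc' : mul ∘ₗ rTensor B mul
      = mul ∘ₗ lTensor B mul ∘ₗ (TensorProduct.assoc K B B B).toLinearMap
  one_mul' : ∀ b : B, mul (unit 1 ⊗ₜ[K] b) = b
  mul_one' : ∀ b : B, mul (b ⊗ₜ[K] unit 1) = b
  coassoc' : rTensor B comul ∘ₗ comul
      = (TensorProduct.assoc K B B B).symm.toLinearMap ∘ₗ lTensor B comul ∘ₗ comul
  counit_comul' : (TensorProduct.lid K B).toLinearMap ∘ₗ rTensor B counit ∘ₗ comul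
      = LinearMap.id
  comul_counit' : (TensorProduct.rid K B).toLinearMap ∘ₗ lTensor B counit ∘ₗ comul
      = LinearMap.id
  yang_baxter' : YangBaxter K B braid
  braid_mul_left : braid ∘ₗ rTensor B mul
      = lTensor B mul ∘ₗ (TensorProduct.assoc K B B B).toLinearMap
          ∘ₗ rTensor B braid ∘ₗ (TensorProduct.assoc K B B B).symm.toLinearMap
          ∘ₗ lTensor B braid ∘ₗ (TensorProduct.assoc K B B B).toLinearMap
  braid_mul_right : braid ∘ₗ lTensor B mul
      = rTensor B mul ∘ₗ (TensorProduct.assoc K B B B).symm.toLinearMap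
          ∘ₗ lTensor B braid ∘ₗ (TensorProduct.assoc K B B B).toLinearMap
          ∘ₗ rTensor B braid ∘ₗ (TensorProduct.assoc K B B B).symm.toLinearMap
  braid_unit_left : ∀ b : B, braid (unit 1 ⊗ₜ[K] b) = b ⊗ₜ[K] unit 1
  braid_unit_right : ∀ b : B, braid (b ⊗ₜ[K] unit 1) = unit 1 ⊗ₜ[K] b
  comul_braid_left : rTensor B comul ∘ₗ braid
      = (TensorProduct.assoc K B B B).symm.toLinearMap ∘ₗ lTensor B braid
          ∘ₗ (TensorProduct.assoc K B B B).toLinearMap ∘ₗ rTensor B braid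
          ∘ₗ (TensorProduct.assoc K B B B).symm.toLinearMap ∘ₗ lTensor B comul
  comul_braid_right : lTensor B comul ∘ₗ braid
      = (TensorProduct.assoc K B B B).toLinearMap ∘ₗ rTensor B braid
          ∘ₗ (TensorProduct.assoc K B B B).symm.toLinearMap ∘ₗ lTensor B braid
          ∘ₗ (TensorProduct.assoc K B B B).toLinearMap ∘ₗ rTensor B comul
  counit_braid_left : (TensorProduct.lid K B).toLinearMap ∘ₗ rTensor B counit ∘ₗ braid
      = (TensorProduct.rid K B).toLinearMap ∘ₗ lTensor B counit
  counit_braid_right : (TensorProduct.rid K B).toLinearMap ∘ₗ lTensor B counit ∘ₗ braid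
      = (TensorProduct.lid K B).toLinearMap ∘ₗ rTensor B counit
  comul_mul' : comul ∘ₗ mul
      = TensorProduct.map mul mul
          ∘ₗ (TensorProduct.assoc K (B ⊗[K] B) B B).toLinearMap
          ∘ₗ rTensor B ((TensorProduct.assoc K B B B).symm.toLinearMap)
          ∘ₗ rTensor B (lTensor B braid)
          ∘ₗ rTensor B ((TensorProduct.assoc K B B B).toLinearMap)
          ∘ₗ (TensorProduct.assoc K (B ⊗[K] B) B B).symm.toLinearMap
          ∘ₗ TensorProduct.map comul comul

variable {B B' : Type*} [AddCommGroup B] [Module K B] [AddCommGroup B'] [Module K B']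

/-- A morphism of braided bialgebras: an algebra map, a coalgebra map and a morphism
of braided vector spaces. -/
def IsBBHom (A : BB K B) (A' : BB K B') (f : B →ₗ[K] B') : Prop :=
  f ∘ₗ A.mul = A'.mul ∘ₗ TensorProduct.map f f ∧
  f ∘ₗ A.unit = A'.unit ∧
  A'.comul ∘ₗ f = TensorProduct.map f f ∘ₗ A.comul ∧
  A'.counit ∘ₗ f = A.counit ∧
  A'.braid ∘ₗ TensorProduct.map f f = TensorProduct.map f f ∘ₗ A.braid

/-- The space of primitive elements `P(B) = {x : Δ x = x ⊗ 1 + 1 ⊗ x}`. -/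
def Prim (A : BB K B) : Submodule K B :=
  LinearMap.ker (A.comul - (TensorProduct.mk K B B).flip (A.unit 1)
    - TensorProduct.mk K B B (A.unit 1))

/-- The product `M · N` of two subspaces of a braided bialgebra `B`. -/
def mulSub (A : BB K B) (M N : Submodule K B) : Submodule K B :=
  Submodule.map A.mul (LinearMap.range (TensorProduct.map M.subtype N.subtype))

/-- Iterated powers of a subspace `V` in `B`: `V^{·0} = K·1`, `V^{·(n+1)} = V^{·n} · V`. -/
def powSub (A : BB K B) (V : Submodule K B) : ℕ → Submodule K B
  | 0 => LinearMap.range A.unit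
  | (n+1) => mulSub K A (powSub A V n) V

/-- `V` generates `B` as a `K`-algebra. -/
def GeneratesAlgebra (A : BB K B) (V : Submodule K B) : Prop :=
  (⨆ n, powSub K A V n) = ⊤

/-- A braided ideal of a braided bialgebra: a two-sided ideal which is a coideal and a
pre-categorical subspace. -/
def IsBraidedIdeal (A : BB K B) (I : Submodule K B) : Prop :=
  mulSub K A ⊤ I ≤ I ∧ mulSub K A I ⊤ ≤ I ∧
  Submodule.map A.comul I ≤ lT K I ⊔ rT K I ∧
  I ≤ LinearMap.ker A.counit ∧
  IsPreCategorical K A.braid I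

/-- The two-sided ideal `B·S·B` of `B` generated by a subspace `S`. -/
def idealGen (A : BB K B) (S : Submodule K B) : Submodule K B :=
  mulSub K A (mulSub K A ⊤ S) ⊤

/-- `(B, γ)` is a `(V, c)`-bialgebra: `γ` is a morphism of braided vector spaces from
`(V, c)` to the infinitesimal part of `B`, and `γ(V)` generates `B` as a `K`-algebra. -/
def IsVCBialgebra {V : Type*} [AddCommGroup V] [Module K V]
    (c : V ⊗[K] V →ₗ[K] V ⊗[K] V) (A : BB K B) (γ : V →ₗ[K] B) : Prop :=
  LinearMap.range γ ≤ Prim K A ∧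
  A.braid ∘ₗ TensorProduct.map γ γ = TensorProduct.map γ γ ∘ₗ c ∧
  GeneratesAlgebra K A (LinearMap.range γ)

section Stmt4Aux

variable {B₀ : Type*} [AddCommGroup B₀] [Module K B₀]
variable {K}

lemma mem_lT' {L : Submodule K B₀} {x b : B₀} (hx : x ∈ L) : x ⊗ₜ[K] b ∈ lT K L :=
  ⟨(⟨x, hx⟩ : L) ⊗ₜ b, rfl⟩

lemma mem_rT' {L : Submodule K B₀} {x b : B₀} (hx : x ∈ L) : b ⊗ₜ[K] x ∈ rT K L :=
  ⟨b ⊗ₜ (⟨x, hx⟩ : L), rfl⟩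

lemma map_lT_le (c : B₀ ⊗[K] B₀ →ₗ[K] B₀ ⊗[K] B₀) {L N : Submodule K B₀} {S : Set B₀}
    (hS : Submodule.span K S = L)
    (h : ∀ x ∈ S, ∀ b : B₀, c (x ⊗ₜ b) ∈ rT K N) :
    Submodule.map c (lT K L) ≤ rT K N := by
  rintro _ ⟨_, ⟨t, rfl⟩, rfl⟩
  induction t using TensorProduct.induction_on with
  | zero => simp
  | add x y hx hy => rw [map_add, map_add]; exact add_mem hx hy
  | tmul x b =>
    obtain ⟨x, hx⟩ := x
    simp only [rTensor_tmul, Submodule.coe_subtype]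
    rw [← hS] at hx
    induction hx using Submodule.span_induction with
    | mem y hy => exact h y hy b
    | zero => simp only [TensorProduct.zero_tmul, map_zero]; exact zero_mem _
    | add y z _ _ hy hz =>
      rw [TensorProduct.add_tmul, map_add]; exact add_mem hy hz
    | smul k y _ hy =>
      rw [← TensorProduct.smul_tmul', map_smul]; exact Submodule.smul_mem _ _ hy

lemma map_rT_le (c : B₀ ⊗[K] B₀ →ₗ[K] B₀ ⊗[K] B₀) {L N : Submodule K B₀} {S : Set B₀}
    (hS : Submodule.span K S = L)
    (h : ∀ x ∈ S, ∀ b : B₀, c (b ⊗ₜ x) ∈ lT K N) :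
    Submodule.map c (rT K L) ≤ lT K N := by
  rintro _ ⟨_, ⟨t, rfl⟩, rfl⟩
  induction t using TensorProduct.induction_on with
  | zero => simp
  | add x y hx hy => rw [map_add, map_add]; exact add_mem hx hy
  | tmul b x =>
    obtain ⟨x, hx⟩ := x
    simp only [lTensor_tmul, Submodule.coe_subtype]
    rw [← hS] at hx
    induction hx using Submodule.span_induction with
    | mem y hy => exact h y hy b
    | zero => simp only [TensorProduct.tmul_zero, map_zero]; exact zero_mem _
    | add y z _ _ hy hz =>
      rw [TensorProduct.tmul_add, map_add]; exact add_mem hy hz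
    | smul k y _ hy =>
      rw [TensorProduct.tmul_smul, map_smul]; exact Submodule.smul_mem _ _ hy

lemma mul_mem_mulSub (A : BB K B₀) {M N : Submodule K B₀} {m n : B₀}
    (hm : m ∈ M) (hn : n ∈ N) : A.mul (m ⊗ₜ n) ∈ mulSub K A M N :=
  ⟨m ⊗ₜ n, ⟨(⟨m, hm⟩ : M) ⊗ₜ (⟨n, hn⟩ : N), rfl⟩, rfl⟩

lemma mulSub_eq_span (A : BB K B₀) (M N : Submodule K B₀) :
    mulSub K A M N
      = Submodule.span K {z | ∃ m ∈ M, ∃ n ∈ N, z = A.mul (m ⊗ₜ n)} := by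
  unfold mulSub
  rw [TensorProduct.range_map_eq_span_tmul, Submodule.map_span]
  congr 1
  ext z
  constructor
  · rintro ⟨_, ⟨m, n, rfl⟩, rfl⟩
    exact ⟨m, m.2, n, n.2, rfl⟩
  · rintro ⟨m, hm, n, hn, rfl⟩
    exact ⟨m ⊗ₜ n, ⟨⟨m, hm⟩, ⟨n, hn⟩, rfl⟩, rfl⟩

lemma powSub_zero_eq_span (A : BB K B₀) (V : Submodule K B₀) :
    Submodule.span K {A.unit 1} = powSub K A V 0 := by
  show _ = LinearMap.range A.unit
  ext x
  rw [Submodule.mem_span_singleton]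
  constructor
  · rintro ⟨k, rfl⟩; exact ⟨k, by rw [← map_smul, smul_eq_mul, mul_one]⟩
  · rintro ⟨k, rfl⟩; exact ⟨k, by rw [← map_smul, smul_eq_mul, mul_one]⟩

end Stmt4Aux

/-- The iterated powers of a categorical subspace of a braided
bialgebra are categorical subspaces. -/
theorem stmt_4 {B : Type*} [AddCommGroup B] [Module K B] (A : BB K B)
    (V : Submodule K B) (hV : IsCategorical K A.braid V) :
    ∀ n : ℕ, IsCategorical K A.braid (powSub K A V n) := by
  intro n
  induction n with
  | zero =>
    constructor
    · refine map_lT_le A.braid (powSub_zero_eq_span A V) ?_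
      rintro x rfl b
      rw [A.braid_unit_left b]
      exact mem_rT' ⟨1, rfl⟩
    · refine map_rT_le A.braid (powSub_zero_eq_span A V) ?_
      rintro x rfl b
      rw [A.braid_unit_right b]
      exact mem_lT' ⟨1, rfl⟩
  | succ n ih =>
    obtain ⟨ih1, ih2⟩ := ih
    set M := powSub K A V n with hM
    constructor
    · refine map_lT_le A.braid (mulSub_eq_span A M V).symm ?_
      rintro _ ⟨m, hm, v, hv, rfl⟩ b
      have key := LinearMap.congr_fun A.braid_mul_left ((m ⊗ₜ[K] v) ⊗ₜ[K] b)
      simp only [LinearMap.comp_apply, LinearEquiv.coe_coe, rTensor_tmul, lTensor_tmul,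
        TensorProduct.assoc_tmul, TensorProduct.assoc_symm_tmul] at key
      rw [key]
      have h1 : A.braid (v ⊗ₜ[K] b) ∈ rT K V :=
        hV.1 ⟨v ⊗ₜ b, mem_lT' hv, rfl⟩
      obtain ⟨t, ht⟩ := h1
      rw [← ht]; clear ht
      induction t using TensorProduct.induction_on with
      | zero => simp only [map_zero, TensorProduct.tmul_zero]; exact zero_mem _
      | add x y hx hy =>
        simp only [map_add, TensorProduct.tmul_add]
        exact add_mem hx hy
      | tmul b₁ v₁ =>
        simp only [lTensor_tmul, Submodule.coe_subtype, LinearEquiv.coe_coe,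
          TensorProduct.assoc_symm_tmul, rTensor_tmul]
        have h2 : A.braid (m ⊗ₜ[K] b₁) ∈ rT K M :=
          ih1 ⟨m ⊗ₜ b₁, mem_lT' hm, rfl⟩
        obtain ⟨s, hs⟩ := h2
        rw [← hs]; clear hs
        induction s using TensorProduct.induction_on with
        | zero => simp only [map_zero, TensorProduct.zero_tmul]; exact zero_mem _
        | add x y hx hy =>
          simp only [map_add, TensorProduct.add_tmul]
          exact add_mem hx hy
        | tmul b₂ m₂ =>
          simp only [lTensor_tmul, Submodule.coe_subtype, LinearEquiv.coe_coe,
            TensorProduct.assoc_tmul]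
          exact mem_rT' (mul_mem_mulSub A m₂.2 v₁.2)
    · refine map_rT_le A.braid (mulSub_eq_span A M V).symm ?_
      rintro _ ⟨m, hm, v, hv, rfl⟩ b
      have key := LinearMap.congr_fun A.braid_mul_right (b ⊗ₜ[K] (m ⊗ₜ[K] v))
      simp only [LinearMap.comp_apply, LinearEquiv.coe_coe, rTensor_tmul, lTensor_tmul,
        TensorProduct.assoc_tmul, TensorProduct.assoc_symm_tmul] at key
      rw [key]
      have h1 : A.braid (b ⊗ₜ[K] m) ∈ lT K M :=
        ih2 ⟨b ⊗ₜ m, mem_rT' hm, rfl⟩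
      obtain ⟨t, ht⟩ := h1
      rw [← ht]; clear ht
      induction t using TensorProduct.induction_on with
      | zero => simp only [map_zero, TensorProduct.zero_tmul]; exact zero_mem _
      | add x y hx hy =>
        simp only [map_add, TensorProduct.add_tmul]
        exact add_mem hx hy
      | tmul m₁ b₁ =>
        simp only [rTensor_tmul, Submodule.coe_subtype, LinearEquiv.coe_coe,
          TensorProduct.assoc_tmul, lTensor_tmul]
        have h2 : A.braid (b₁ ⊗ₜ[K] v) ∈ lT K V :=
          hV.2 ⟨b₁ ⊗ₜ v, mem_rT' hv, rfl⟩
        obtain ⟨s, hs⟩ := h2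
        rw [← hs]; clear hs
        induction s using TensorProduct.induction_on with
        | zero => simp only [map_zero, TensorProduct.tmul_zero]; exact zero_mem _
        | add x y hx hy =>
          simp only [map_add, TensorProduct.tmul_add]
          exact add_mem hx hy
        | tmul v₂ b₂ =>
          simp only [rTensor_tmul, Submodule.coe_subtype, LinearEquiv.coe_coe,
            TensorProduct.assoc_symm_tmul]
          exact mem_lT' (mul_mem_mulSub A m₁.2 v₂.2)
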